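/- Let K ≥ 1, let p_max ∈ ℝ^K with p_max ≥ 0, and for each k ∈ Fin K let q_k⁺ : ℝ^K → ℝ be continuous, q_k⁻ : ℝ^K → ℝ be concave and differentiable, c_k⁺ : ℝ^K → ℝ be arbitrary, c_k⁻ : ℝ^K → ℝ be concave and differentiable, and let μ_k ≥ 0 and Ψ_k ≥ 0 with Σ_k Ψ_k > 0. Define GEE(p) = (Σ_k (q_k⁺(p) − q_k⁻(p)))/(Σ_k (μ_k p_k + Ψ_k)). For each x ∈ ℝ^K define the linearized feasible set D(x) = {p : 0 ≤ p ≤ p_max and for all k, c_k⁺(p) − (c_k⁻(x) + Dc_k⁻(x)(p − x)) ≥ 0} and the approximate objective G_x(p) = (Σ_k [q_k⁺(p) − (q_k⁻(x) + Dq_k⁻(x)(p − x))])/(Σ_k (μ_k p_k + Ψ_k)), where Dh(x) denotes the Fréchet derivative of h at x. Let (p_j)_{j ≥ 0} be a sequence in ℝ^K with 0 ≤ p_0 ≤ p_max and c_k⁺(p_0) − c_k⁻(p_0) ≥ 0 for all k, and such that for every j, p_{j+1} ∈ D(p_j) and p_{j+1} maximizes G_{p_j} over D(p_j). Then every p_j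 is feasible for the original problem (0 ≤ p_j ≤ p_max and c_k⁺(p_j) − c_k⁻(p_j) ≥ 0 for all k), the sequence (GEE(p_j))_j is monotone nondecreasing, and it converges to a finite limit. -/

import Mathlib

/-- A concave differentiable function lies below its tangent plane. -/
lemma concave_le_tangent {n : ℕ} {f : (Fin n → ℝ) → ℝ}
    (hconc : ConcaveOn ℝ Set.univ f) (hdiff : Differentiable ℝ f)
    (x p : Fin n → ℝ) : f p ≤ f x + fderiv ℝ f x (p - x) := by
  set v := p - x with hv
  set g : ℝ → ℝ := fun t => f (x + t • v) with hg
  have hline : HasDerivAt (fun t : ℝ => x + t • v) v 0 := by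
    simpa using ((hasDerivAt_id (0 : ℝ)).smul_const v).const_add x
  have hg0 : HasDerivAt g (fderiv ℝ f x v) 0 := by
    have := (hdiff (x + (0 : ℝ) • v)).hasFDerivAt.comp_hasDerivAt 0 hline
    rw [zero_smul, add_zero] at this
    exact this
  have hgconc : ConcaveOn ℝ Set.univ g := by
    have h := hconc.comp_affineMap (AffineMap.lineMap x p)
    have hs : (AffineMap.lineMap x p) ⁻¹' Set.univ = (Set.univ : Set ℝ) := by simp
    have hfun : (f ∘ AffineMap.lineMap x p) = g := by
      funext t
      show f (AffineMap.lineMap x p t) = f (x + t • v)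
      rw [AffineMap.lineMap_apply, hv, vsub_eq_sub, vadd_eq_add, add_comm]
    rw [hs, hfun] at h
    exact h
  have hcv : ConvexOn ℝ Set.univ (fun t => -g t) := hgconc.neg
  have hsl := hcv.le_slope_of_hasDerivAt (Set.mem_univ (0 : ℝ)) (Set.mem_univ 1)
    one_pos hg0.neg
  have hslope : slope (fun t => -g t) 0 1 = g 0 - g 1 := by
    simp [slope_def_field]
    ring
  rw [hslope] at hsl
  have hg1 : g 1 = f p := by simp [hg, hv]
  have hg0' : g 0 = f x := by simp [hg]
  rw [hg1, hg0'] at hsl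
  linarith

/-- Monotone-convergence content of Proposition 6 of the paper: the sequential
fractional programming iteration for global energy efficiency maximization stays
feasible, monotonically increases the GEE, and converges. -/
theorem gee_sequential_fractional_programming {K : ℕ} (hK : 1 ≤ K)
    (pmax : Fin K → ℝ) (hpmax : 0 ≤ pmax)
    (qp qm cp cm : Fin K → (Fin K → ℝ) → ℝ)
    (hqpc : ∀ k, Continuous (qp k))
    (hqmconc : ∀ k, ConcaveOn ℝ Set.univ (qm k))
    (hqmdiff : ∀ k, Differentiable ℝ (qm k))
    (hcmconc : ∀ k, ConcaveOn ℝ Set.univ (cm k))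
    (hcmdiff : ∀ k, Differentiable ℝ (cm k))
    (μ Ψ : Fin K → ℝ) (hμ : ∀ k, 0 ≤ μ k) (hΨ : ∀ k, 0 ≤ Ψ k)
    (hΨsum : 0 < ∑ k, Ψ k)
    (GEE : (Fin K → ℝ) → ℝ)
    (hGEE : ∀ p : Fin K → ℝ,
      GEE p = (∑ k, (qp k p - qm k p)) / (∑ k, (μ k * p k + Ψ k)))
    (D : (Fin K → ℝ) → Set (Fin K → ℝ))
    (hD : ∀ x : Fin K → ℝ, D x = {p : Fin K → ℝ | 0 ≤ p ∧ p ≤ pmax ∧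
      ∀ k, 0 ≤ cp k p - (cm k x + fderiv ℝ (cm k) x (p - x))})
    (G : (Fin K → ℝ) → (Fin K → ℝ) → ℝ)
    (hG : ∀ x p : Fin K → ℝ, G x p =
      (∑ k, (qp k p - (qm k x + fderiv ℝ (qm k) x (p - x)))) /
        (∑ k, (μ k * p k + Ψ k)))
    (p : ℕ → Fin K → ℝ)
    (hp0 : 0 ≤ p 0 ∧ p 0 ≤ pmax ∧ ∀ k, 0 ≤ cp k (p 0) - cm k (p 0))
    (hstep : ∀ j : ℕ, p (j + 1) ∈ D (p j) ∧
      ∀ y ∈ D (p j), G (p j) y ≤ G (p j) (p (j + 1))) :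
    (∀ j : ℕ, 0 ≤ p j ∧ p j ≤ pmax ∧ ∀ k, 0 ≤ cp k (p j) - cm k (p j)) ∧
    Monotone (fun j => GEE (p j)) ∧
    ∃ L : ℝ, Filter.Tendsto (fun j => GEE (p j)) Filter.atTop (nhds L) := by
  -- feasibility
  have feas : ∀ j : ℕ, 0 ≤ p j ∧ p j ≤ pmax ∧
      ∀ k, 0 ≤ cp k (p j) - cm k (p j) := by
    intro j
    induction j with
    | zero => exact hp0
    | succ n _ =>
      have hmem := (hstep n).1
      rw [hD] at hmem
      obtain ⟨h1, h2, h3⟩ := hmem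
      refine ⟨h1, h2, fun k => ?_⟩
      have htan := concave_le_tangent (hcmconc k) (hcmdiff k) (p n) (p (n + 1))
      have := h3 k
      linarith
  -- positive denominator
  have hden : ∀ y : Fin K → ℝ, 0 ≤ y → 0 < ∑ k, (μ k * y k + Ψ k) := by
    intro y hy
    rw [Finset.sum_add_distrib]
    have : 0 ≤ ∑ k, μ k * y k :=
      Finset.sum_nonneg fun k _ => mul_nonneg (hμ k) (hy k)
    linarith
  -- `p j ∈ D (p j)`
  have hself : ∀ j, p j ∈ D (p j) := by
    intro j
    rw [hD]
    refine ⟨(feas j).1, (feas j).2.1, fun k => ?_⟩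
    have := (feas j).2.2 k
    simpa using this
  -- `G (p j) (p j) = GEE (p j)`
  have hGeq : ∀ j, G (p j) (p j) = GEE (p j) := by
    intro j
    rw [hG, hGEE]
    congr 1
    apply Finset.sum_congr rfl
    intro k _
    simp
  -- `G (p j) (p (j+1)) ≤ GEE (p (j+1))`
  have hGle : ∀ j, G (p j) (p (j + 1)) ≤ GEE (p (j + 1)) := by
    intro j
    rw [hG, hGEE]
    have hc := hden _ (feas (j + 1)).1
    have hnum : (∑ k, (qp k (p (j + 1)) -
        (qm k (p j) + fderiv ℝ (qm k) (p j) (p (j + 1) - p j)))) ≤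
        ∑ k, (qp k (p (j + 1)) - qm k (p (j + 1))) := by
      apply Finset.sum_le_sum
      intro k _
      have htan := concave_le_tangent (hqmconc k) (hqmdiff k) (p j) (p (j + 1))
      linarith
    exact div_le_div_of_nonneg_right hnum hc.le |>.trans_eq rfl
  -- monotonicity
  have hmono : Monotone fun j => GEE (p j) := by
    apply monotone_nat_of_le_succ
    intro j
    calc GEE (p j) = G (p j) (p j) := (hGeq j).symm
      _ ≤ G (p j) (p (j + 1)) := (hstep j).2 (p j) (hself j)
      _ ≤ GEE (p (j + 1)) := hGle j
  -- boundedness and convergence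
  have hcomp : IsCompact (Set.Icc (0 : Fin K → ℝ) pmax) := isCompact_Icc
  have hcont : ContinuousOn GEE (Set.Icc (0 : Fin K → ℝ) pmax) := by
    have hGEEfun : GEE = fun y => (∑ k, (qp k y - qm k y)) /
        (∑ k, (μ k * y k + Ψ k)) := funext hGEE
    rw [hGEEfun]
    have hnumc : Continuous fun y : Fin K → ℝ => ∑ k, (qp k y - qm k y) :=
      continuous_finset_sum _ fun k _ => (hqpc k).sub (hqmdiff k).continuous
    have hdenc : Continuous fun y : Fin K → ℝ => ∑ k, (μ k * y k + Ψ k) :=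
      continuous_finset_sum _ fun k _ =>
        ((continuous_const.mul (continuous_apply k)).add continuous_const)
    apply hnumc.continuousOn.div hdenc.continuousOn
    intro y hy
    exact (hden y hy.1).ne'
  have hbdd : BddAbove (Set.range fun j => GEE (p j)) := by
    have himg : BddAbove (GEE '' Set.Icc (0 : Fin K → ℝ) pmax) :=
      (hcomp.image_of_continuousOn hcont).bddAbove
    apply himg.mono
    rintro _ ⟨j, rfl⟩
    exact ⟨p j, ⟨(feas j).1, (feas j).2.1⟩, rfl⟩
  exact ⟨feas, hmono, ⟨_, tendsto_atTop_ciSup hmono hbdd⟩⟩
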